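/- arXiv:math/0509091 — 2 statements merged into one kernel-verified Lean document; each statement's English description precedes it below -/
import Mathlib

section
/- Let n ≥ 1 and let g be an element of the unitary group U(n+1). If the intersection ℝPⁿ ∩ g·ℝPⁿ of the standard real projective subspace of ℂPⁿ with its image under g is a finite set, then it contains at least n+1 points. -/
/-- The standard real projective subspace `ℝPⁿ ⊂ ℂPⁿ`: the set of points of
`ℙ(ℂ^{n+1})` admitting a nonzero representative vector with real coordinates. -/
def realProjSet (n : ℕ) : Set (Projectivization ℂ (Fin (n + 1) → ℂ)) :=
  {p | ∃ (v : Fin (n + 1) → ℝ) (hv : (fun i => (v i : ℂ)) ≠ 0),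
    p = Projectivization.mk ℂ (fun i => (v i : ℂ)) hv}

/-- The image `g·ℝPⁿ ⊂ ℂPⁿ` of the standard real projective subspace under
`g ∈ U(n+1)`, acting on `ℙ(ℂ^{n+1})` through the linear action on `ℂ^{n+1}`. -/
def unitaryRealProjSet (n : ℕ) (g : Matrix.unitaryGroup (Fin (n + 1)) ℂ) :
    Set (Projectivization ℂ (Fin (n + 1) → ℂ)) :=
  {p | ∃ (v : Fin (n + 1) → ℝ)
      (hv : Matrix.mulVec (g : Matrix (Fin (n + 1)) (Fin (n + 1)) ℂ)
        (fun i => (v i : ℂ)) ≠ 0),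
    p = Projectivization.mk ℂ
      (Matrix.mulVec (g : Matrix (Fin (n + 1)) (Fin (n + 1)) ℂ) (fun i => (v i : ℂ))) hv}

open Matrix Module.End Submodule


lemma star_mulVec_symm {m : ℕ} (M : Matrix (Fin m) (Fin m) ℂ) (hM : Mᵀ = M)
    (x : Fin m → ℂ) : star (M *ᵥ x) = Mᴴ *ᵥ star x := by
  funext i
  simp only [Pi.star_apply, Matrix.mulVec, dotProduct, Matrix.conjTranspose_apply,
    star_sum, star_mul', Pi.star_apply]
  refine Finset.sum_congr rfl fun j _ => ?_
  have : M j i = M i j := by conv_lhs => rw [← hM, Matrix.transpose_apply]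
  rw [this]

lemma eigvec_span (n : ℕ) (A : Matrix (Fin (n+1)) (Fin (n+1)) ℂ) (hsymm : Aᵀ = A)
    (hA1 : Aᴴ * A = 1) (hA2 : A * Aᴴ = 1) :
    ∃ b : Set (Fin (n+1) → ℂ),
      (∀ x ∈ b, star x = x ∧ ∃ lam : ℂ, A *ᵥ x = lam • x) ∧
      LinearIndependent ℝ ((↑) : b → (Fin (n+1) → ℂ)) ∧ n + 1 ≤ b.ncard := by
  classical
  have hAHsymm : (Aᴴ)ᵀ = Aᴴ := by
    ext i j
    simp only [Matrix.transpose_apply, Matrix.conjTranspose_apply]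
    have : A i j = A j i := by conv_lhs => rw [← hsymm, Matrix.transpose_apply]
    rw [this]
  set Sc : Matrix (Fin (n+1)) (Fin (n+1)) ℂ := (2⁻¹ : ℂ) • (A + Aᴴ) with hSc
  set Tc : Matrix (Fin (n+1)) (Fin (n+1)) ℂ := (-(Complex.I) * 2⁻¹) • (A - Aᴴ) with hTc
  have hScT : Scᵀ = Sc := by
    rw [hSc, Matrix.transpose_smul, Matrix.transpose_add, hsymm, hAHsymm]
  have hTcT : Tcᵀ = Tc := by
    rw [hTc, Matrix.transpose_smul, Matrix.transpose_sub, hsymm, hAHsymm]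
  have hScH : Sc.IsHermitian := by
    show Scᴴ = Sc
    rw [hSc, Matrix.conjTranspose_smul, Matrix.conjTranspose_add, Matrix.conjTranspose_conjTranspose]
    rw [add_comm (Aᴴ) A]
    congr 1
    simp
  have hTcH : Tc.IsHermitian := by
    show Tcᴴ = Tc
    rw [hTc, Matrix.conjTranspose_smul, Matrix.conjTranspose_sub, Matrix.conjTranspose_conjTranspose]
    have hst : star (-(Complex.I) * 2⁻¹) = Complex.I * 2⁻¹ := by simp
    rw [show (A - Aᴴ) = -(Aᴴ - A) from by rw [neg_sub], smul_neg, ← neg_smul, ← neg_mul, neg_neg, ← hst]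
  have hAAH : Commute A Aᴴ := by
    show A * Aᴴ = Aᴴ * A
    rw [hA1, hA2]
  have hcomm : Sc * Tc = Tc * Sc := by
    have h1 : Commute (A + Aᴴ) (A - Aᴴ) :=
      Commute.add_left ((Commute.refl A).sub_right hAAH)
        ((hAAH.symm).sub_right (Commute.refl Aᴴ))
    rw [hSc, hTc, Matrix.smul_mul, Matrix.mul_smul, Matrix.smul_mul, Matrix.mul_smul, h1.eq, smul_smul, smul_smul, mul_comm]
  have hdecomp : A = Sc + Complex.I • Tc := by
    rw [hSc, hTc, smul_smul]
    have : Complex.I * (-(Complex.I) * 2⁻¹) = (2⁻¹ : ℂ) := by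
      have := Complex.I_mul_I
      ring_nf
      rw [Complex.I_sq]
      ring
    rw [this]
    module
  -- operators on Euclidean space
  set Sop : EuclideanSpace ℂ (Fin (n+1)) →ₗ[ℂ] EuclideanSpace ℂ (Fin (n+1)) :=
    Matrix.toEuclideanLin Sc with hSop
  set Top : EuclideanSpace ℂ (Fin (n+1)) →ₗ[ℂ] EuclideanSpace ℂ (Fin (n+1)) :=
    Matrix.toEuclideanLin Tc with hTop
  have hSopSym : Sop.IsSymmetric := Matrix.isHermitian_iff_isSymmetric.mp hScH
  have hTopSym : Top.IsSymmetric := Matrix.isHermitian_iff_isSymmetric.mp hTcH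
  have hcompose : ∀ (M N : Matrix (Fin (n+1)) (Fin (n+1)) ℂ),
      (Matrix.toEuclideanLin M) * (Matrix.toEuclideanLin N) = Matrix.toEuclideanLin (M * N) := by
    intro M N
    apply LinearMap.ext
    intro x
    show Matrix.toEuclideanLin M (Matrix.toEuclideanLin N x) = _
    rw [Matrix.toEuclideanLin_apply, Matrix.toEuclideanLin_apply, Matrix.toEuclideanLin_apply]
    simp [Matrix.mulVec_mulVec]
  have hcommute : Commute Sop Top := by
    show Sop * Top = Top * Sop
    rw [hSop, hTop, hcompose, hcompose, hcomm]
  have htop : (⨆ α, ⨆ γ, eigenspace Sop α ⊓ eigenspace Top γ) = ⊤ :=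
    hSopSym.iSup_iSup_eigenspace_inf_eigenspace_eq_top_of_commute hTopSym hcommute
  -- the set of real eigenvectors and its real span
  set D : Set (Fin (n+1) → ℂ) := {x | star x = x ∧ ∃ lam : ℂ, A *ᵥ x = lam • x} with hD
  set M : Submodule ℝ (Fin (n+1) → ℂ) := Submodule.span ℝ D with hM
  have key : ∀ y : EuclideanSpace ℂ (Fin (n+1)),
      ((WithLp.equiv 2 (Fin (n+1) → ℂ)) y + star ((WithLp.equiv 2 (Fin (n+1) → ℂ)) y)) ∈ M := by
    intro y
    have hy : y ∈ (⨆ α, ⨆ γ, eigenspace Sop α ⊓ eigenspace Top γ) := htop ▸ Submodule.mem_top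

    refine Submodule.iSup_induction _
      (motive := fun z => ((WithLp.equiv 2 (Fin (n+1) → ℂ)) z +
        star ((WithLp.equiv 2 (Fin (n+1) → ℂ)) z)) ∈ M) hy ?_ ?_ ?_
    · intro α y hy
      refine Submodule.iSup_induction _
        (motive := fun z => ((WithLp.equiv 2 (Fin (n+1) → ℂ)) z +
          star ((WithLp.equiv 2 (Fin (n+1) → ℂ)) z)) ∈ M) hy ?_ ?_ ?_
      · intro γ y hy
        rcases eq_or_ne y 0 with rfl | hyne
        · simpa using M.zero_mem
        obtain ⟨hy1, hy2⟩ := hy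
        have hS' : Sop y = α • y := mem_eigenspace_iff.mp hy1
        have hT' : Top y = γ • y := mem_eigenspace_iff.mp hy2
        have hαr : star α = α := hSopSym.conj_eigenvalue_eq_self
          (hasEigenvalue_of_hasEigenvector ⟨hy1, hyne⟩)
        have hγr : star γ = γ := hTopSym.conj_eigenvalue_eq_self
          (hasEigenvalue_of_hasEigenvector ⟨hy2, hyne⟩)
        set y' : Fin (n+1) → ℂ := (WithLp.equiv 2 (Fin (n+1) → ℂ)) y with hy'
        have hSy : Sc *ᵥ y' = α • y' := by
          have := congrArg (WithLp.equiv 2 (Fin (n+1) → ℂ)) hS'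
          exact this
        have hTy : Tc *ᵥ y' = γ • y' := by
          have := congrArg (WithLp.equiv 2 (Fin (n+1) → ℂ)) hT'
          exact this
        set lam : ℂ := α + Complex.I * γ with hlamdef
        have hAy : A *ᵥ y' = lam • y' := by
          rw [hdecomp, Matrix.add_mulVec, hSy, Matrix.smul_mulVec, hTy,
            smul_smul, hlamdef, add_smul]
        have hAsy : A *ᵥ (star y') = lam • (star y') := by
          have h1 : Sc *ᵥ (star y') = α • (star y') := by
            rw [← hScH, ← star_mulVec_symm Sc hScT y', hSy, star_smul, hαr]
          have h2 : Tc *ᵥ (star y') = γ • (star y') := by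
            rw [← hTcH, ← star_mulVec_symm Tc hTcT y', hTy, star_smul, hγr]
          rw [hdecomp, Matrix.add_mulVec, h1, Matrix.smul_mulVec, h2,
            smul_smul, hlamdef, add_smul]
        refine Submodule.subset_span ?_
        refine ⟨?_, lam, ?_⟩
        · simp [star_add, add_comm]
        · rw [Matrix.mulVec_add, hAy, hAsy, smul_add]
      · simpa using M.zero_mem
      · intro a b ha hb
        have : (WithLp.equiv 2 (Fin (n+1) → ℂ)) (a + b) +
            star ((WithLp.equiv 2 (Fin (n+1) → ℂ)) (a + b)) =
            ((WithLp.equiv 2 (Fin (n+1) → ℂ)) a + star ((WithLp.equiv 2 (Fin (n+1) → ℂ)) a)) +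
            ((WithLp.equiv 2 (Fin (n+1) → ℂ)) b + star ((WithLp.equiv 2 (Fin (n+1) → ℂ)) b)) := by
          rw [show (WithLp.equiv 2 (Fin (n+1) → ℂ)) (a + b) = (WithLp.equiv 2 (Fin (n+1) → ℂ)) a + (WithLp.equiv 2 (Fin (n+1) → ℂ)) b from rfl, star_add]
          abel
        rw [this]
        exact M.add_mem ha hb
    · simpa using M.zero_mem
    · intro a b ha hb
      have : (WithLp.equiv 2 (Fin (n+1) → ℂ)) (a + b) +
          star ((WithLp.equiv 2 (Fin (n+1) → ℂ)) (a + b)) =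
          ((WithLp.equiv 2 (Fin (n+1) → ℂ)) a + star ((WithLp.equiv 2 (Fin (n+1) → ℂ)) a)) +
          ((WithLp.equiv 2 (Fin (n+1) → ℂ)) b + star ((WithLp.equiv 2 (Fin (n+1) → ℂ)) b)) := by
        rw [show (WithLp.equiv 2 (Fin (n+1) → ℂ)) (a + b) = (WithLp.equiv 2 (Fin (n+1) → ℂ)) a + (WithLp.equiv 2 (Fin (n+1) → ℂ)) b from rfl, star_add]
        abel
      rw [this]
      exact M.add_mem ha hb
  -- every real vector lies in M
  have hreal : ∀ v : Fin (n+1) → ℝ, (fun i => (v i : ℂ)) ∈ M := by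
    intro v
    set x : Fin (n+1) → ℂ := fun i => (v i : ℂ) with hx
    have hxs : star x = x := by
      funext i
      simp [hx, Complex.conj_ofReal]
    have h2 := key ((WithLp.equiv 2 (Fin (n+1) → ℂ)).symm x)
    simp only [Equiv.apply_symm_apply, hxs] at h2
    have : x = (2⁻¹ : ℝ) • (x + x) := by
      funext i
      simp [Complex.real_smul]
      ring
    rw [this]
    exact M.smul_mem _ h2
  -- M has rank at least n+1
  let ιlin : (Fin (n+1) → ℝ) →ₗ[ℝ] (Fin (n+1) → ℂ) :=
    { toFun := fun v i => (v i : ℂ)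
      map_add' := by
        intro a b; funext i
        simp [Pi.add_apply]
      map_smul' := by
        intro c a; funext i
        simp [Pi.smul_apply, Complex.real_smul] }
  have hιinj : Function.Injective ιlin := by
    intro a b hab
    funext i
    exact Complex.ofReal_inj.mp (congrFun hab i)
  have hrange : LinearMap.range ιlin ≤ M := by
    rintro _ ⟨v, rfl⟩
    exact hreal v
  have hrank : n + 1 ≤ Module.finrank ℝ M := by
    have h1 : Module.finrank ℝ (LinearMap.range ιlin) = n + 1 := by
      rw [LinearMap.finrank_range_of_inj hιinj, Module.finrank_fin_fun]
    calc n + 1 = Module.finrank ℝ (LinearMap.range ιlin) := h1.symm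
      _ ≤ Module.finrank ℝ M := Submodule.finrank_mono hrange
  obtain ⟨b, hbD, hbspan, hbli⟩ := exists_linearIndependent ℝ D
  haveI : Fintype b := (hbli.setFinite).fintype
  have hbcard : n + 1 ≤ b.ncard := by
    have h2 : Module.finrank ℝ (Submodule.span ℝ b) = b.toFinset.card :=
      finrank_span_set_eq_card hbli
    rw [Set.ncard_eq_toFinset_card' b, ← h2, hbspan]
    exact hrank
  exact ⟨b, fun x hx => hbD hx, hbli, hbcard⟩

lemma ct_t {k : ℕ} (M : Matrix (Fin k) (Fin k) ℂ) : (Mᵀ)ᴴ = (Mᴴ)ᵀ := by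
  ext i j; simp

lemma star_mulVec_conjT {m : ℕ} (M : Matrix (Fin m) (Fin m) ℂ) (x : Fin m → ℂ)
    (hx : star x = x) : star (Mᴴ *ᵥ x) = Mᵀ *ᵥ x := by
  funext i
  simp only [Pi.star_apply, Matrix.mulVec, dotProduct, Matrix.conjTranspose_apply,
    Matrix.transpose_apply, star_sum, star_mul', Pi.star_apply, star_star]
  refine Finset.sum_congr rfl fun j _ => ?_
  congr 1
  exact congrFun hx j

/-- Givental's theorem for unitary translates: if `ℝPⁿ ∩ g·ℝPⁿ` is finite,
it has at least `n + 1` points. -/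
theorem givental_unitary_intersection (n : ℕ) (hn : 1 ≤ n)
    (g : Matrix.unitaryGroup (Fin (n + 1)) ℂ)
    (hfin : (realProjSet n ∩ unitaryRealProjSet n g).Finite) :
    n + 1 ≤ (realProjSet n ∩ unitaryRealProjSet n g).ncard := by
  classical
  set G := (g : Matrix (Fin (n+1)) (Fin (n+1)) ℂ) with hG
  have hg1 : Gᴴ * G = 1 := by
    simpa [Matrix.star_eq_conjTranspose] using (Matrix.mem_unitaryGroup_iff'.mp g.2)
  have hg2 : G * Gᴴ = 1 := by
    simpa [Matrix.star_eq_conjTranspose] using (Matrix.mem_unitaryGroup_iff.mp g.2)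
  have ht1 : (Gᵀ)ᴴ * Gᵀ = 1 := by
    rw [ct_t, ← Matrix.transpose_mul]
    have := congrArg Matrix.transpose hg2
    simpa using this
  have ht2 : Gᵀ * (Gᵀ)ᴴ = 1 := by
    rw [ct_t, ← Matrix.transpose_mul]
    have := congrArg Matrix.transpose hg1
    simpa using this
  set A : Matrix (Fin (n+1)) (Fin (n+1)) ℂ := G * Gᵀ with hA
  have hsymm : Aᵀ = A := by
    rw [hA, Matrix.transpose_mul, Matrix.transpose_transpose]
  have hA1 : Aᴴ * A = 1 := by
    calc Aᴴ * A = (Gᵀ)ᴴ * (Gᴴ * G) * Gᵀ := by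
          rw [hA]; simp only [Matrix.conjTranspose_mul]; noncomm_ring
      _ = 1 := by rw [hg1, mul_one, ht1]
  have hA2 : A * Aᴴ = 1 := by
    calc A * Aᴴ = G * (Gᵀ * (Gᵀ)ᴴ) * Gᴴ := by
          rw [hA]; simp only [Matrix.conjTranspose_mul]; noncomm_ring
      _ = 1 := by rw [ht2, mul_one, hg2]
  obtain ⟨b, hbD, hbli, hbcard⟩ := eigvec_span n A hsymm hA1 hA2
  -- injectivity of mulVec by G
  have hGinj : Function.Injective (fun z : Fin (n+1) → ℂ => G *ᵥ z) := by
    intro a c hac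
    have := congrArg (fun z => Gᴴ *ᵥ z) hac
    simpa [Matrix.mulVec_mulVec, hg1, Matrix.one_mulVec] using this
  -- the map to projective space
  have hone : (fun _ : Fin (n+1) => (1 : ℂ)) ≠ 0 := by
    intro h
    exact one_ne_zero (congrFun h 0)
  set F : (Fin (n+1) → ℂ) → Projectivization ℂ (Fin (n+1) → ℂ) :=
    fun x => if h : x = 0 then Projectivization.mk ℂ (fun _ => 1) hone
      else Projectivization.mk ℂ x h with hF
  have hxne : ∀ x ∈ b, x ≠ 0 := fun x hx => hbli.ne_zero ⟨x, hx⟩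
  have hFval : ∀ (x : Fin (n+1) → ℂ) (h : x ≠ 0), F x = Projectivization.mk ℂ x h := by
    intro x h
    rw [hF]
    exact dif_neg h
  -- image of b lands in the intersection
  have hsubset : F '' b ⊆ realProjSet n ∩ unitaryRealProjSet n g := by
    rintro _ ⟨x, hxb, rfl⟩
    obtain ⟨hstar, lam, hlam⟩ := hbD x hxb
    have hx0 : x ≠ 0 := hxne x hxb
    rw [hFval x hx0]
    have hcoords : ∀ i, ((x i).re : ℂ) = x i := by
      intro i
      have := congrFun hstar i
      exact Complex.conj_eq_iff_re.mp this
    constructor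
    · -- real side
      refine ⟨fun i => (x i).re, ?_, ?_⟩
      · show (fun i => ((x i).re : ℂ)) ≠ 0
        intro h
        apply hx0
        funext i
        rw [← hcoords i]
        exact congrFun h i
      · rw [Projectivization.mk_eq_mk_iff']
        exact ⟨1, by funext i; simp [hcoords i]⟩
    · -- unitary side
      have hAH : Aᴴ *ᵥ x = star lam • x := by
        rw [← hstar]
        rw [← star_mulVec_symm A hsymm x, hlam, star_smul]
      have hmod : lam * star lam = 1 := by
        have hxx : (lam * star lam) • x = x := by
          calc (lam * star lam) • x = lam • (star lam • x) := by rw [smul_smul]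
            _ = lam • (Aᴴ *ᵥ x) := by rw [hAH]
            _ = Aᴴ *ᵥ (lam • x) := by rw [Matrix.mulVec_smul]
            _ = Aᴴ *ᵥ (A *ᵥ x) := by rw [hlam]
            _ = (Aᴴ * A) *ᵥ x := by rw [Matrix.mulVec_mulVec]
            _ = x := by rw [hA1, Matrix.one_mulVec]
        obtain ⟨j, hj⟩ := Function.ne_iff.mp hx0
        have h1 : (lam * star lam) * x j = 1 * x j := by
          rw [one_mul]
          exact congrFun hxx j
        exact mul_right_cancel₀ hj h1
      have hlamne : lam ≠ 0 := by
        intro h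
        rw [h, zero_mul] at hmod
        exact zero_ne_one hmod
      obtain ⟨μ, hμ⟩ := IsAlgClosed.exists_pow_nat_eq lam (n := 2) two_pos
      have hns : μ * star μ = (Complex.normSq μ : ℂ) := by
        rw [show (star μ) = (starRingEnd ℂ) μ from rfl, Complex.mul_conj]
      have hμmod : μ * star μ = 1 := by
        have h2 : (Complex.normSq μ : ℂ) ^ 2 = 1 := by
          calc (Complex.normSq μ : ℂ) ^ 2 = (μ * star μ) ^ 2 := by rw [hns]
            _ = μ ^ 2 * star (μ ^ 2) := by rw [star_pow]; ring
            _ = lam * star lam := by rw [hμ]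
            _ = 1 := hmod
        have h3 : (Complex.normSq μ : ℝ) ^ 2 = 1 := by exact_mod_cast h2
        have h4 : Complex.normSq μ = 1 := by nlinarith [Complex.normSq_nonneg μ]
        rw [hns, h4]
        norm_num
      have hμne : μ ≠ 0 := by
        intro h
        rw [h, zero_mul] at hμmod
        exact zero_ne_one hμmod
      set wc : Fin (n+1) → ℂ := μ • (Gᴴ *ᵥ x) with hwc
      have hGwc : G *ᵥ wc = μ • x := by
        rw [hwc, Matrix.mulVec_smul, Matrix.mulVec_mulVec, hg2, Matrix.one_mulVec]
      have hwcstar : star wc = wc := by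
        apply hGinj
        show G *ᵥ star wc = G *ᵥ wc
        have hsw : star wc = star μ • (Gᵀ *ᵥ x) := by
          rw [hwc, star_smul, star_mulVec_conjT G x hstar]
        rw [hsw, hGwc, Matrix.mulVec_smul, Matrix.mulVec_mulVec]
        show (star μ) • (A *ᵥ x) = μ • x
        rw [hlam, smul_smul, ← hμ]
        congr 1
        calc star μ * μ ^ 2 = (μ * star μ) * μ := by ring
          _ = μ := by rw [hμmod, one_mul]
      have hwcoords : ∀ i, ((wc i).re : ℂ) = wc i := by
        intro i
        exact Complex.conj_eq_iff_re.mp (congrFun hwcstar i)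
      have hweq : (fun i => (((wc i).re : ℝ) : ℂ)) = wc := by
        funext i
        exact hwcoords i
      have hGw : (g : Matrix (Fin (n+1)) (Fin (n+1)) ℂ) *ᵥ (fun i => (((wc i).re : ℝ) : ℂ))
          = μ • x := by
        rw [hweq, ← hG, hGwc]
      refine ⟨fun i => (wc i).re, ?_, ?_⟩
      · show (g : Matrix (Fin (n+1)) (Fin (n+1)) ℂ) *ᵥ (fun i => (((wc i).re : ℝ) : ℂ)) ≠ 0
        rw [hGw]
        exact smul_ne_zero hμne hx0
      · rw [Projectivization.mk_eq_mk_iff']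
        refine ⟨μ⁻¹, ?_⟩
        show μ⁻¹ • ((g : Matrix (Fin (n+1)) (Fin (n+1)) ℂ) *ᵥ (fun i => (((wc i).re : ℝ) : ℂ))) = x
        rw [hGw, smul_smul, inv_mul_cancel₀ hμne, one_smul]
  -- F is injective on b
  have hinj : Set.InjOn F b := by
    intro x hx y hy hxy
    by_contra hne
    have hx0 : x ≠ 0 := hxne x hx
    have hy0 : y ≠ 0 := hxne y hy
    rw [hFval x hx0, hFval y hy0, Projectivization.mk_eq_mk_iff] at hxy
    obtain ⟨a, ha⟩ := hxy
    have hstx : star x = x := (hbD x hx).1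
    have hsty : star y = y := (hbD y hy).1
    obtain ⟨j, hj⟩ := Function.ne_iff.mp hy0
    have haj : (a : ℂ) * y j = x j := congrFun ha j
    have hareal : star (a : ℂ) = (a : ℂ) := by
      have h1 : star ((a : ℂ) * y j) = star (x j) := congrArg star haj
      rw [star_mul'] at h1
      have h2 : star (y j) = y j := congrFun hsty j
      have h3 : star (x j) = x j := congrFun hstx j
      rw [h2, h3, ← haj] at h1
      exact mul_right_cancel₀ hj h1
    have hxay : x = ((a : ℂ).re : ℝ) • y := by
      funext i
      have h5 : (a : ℂ) * y i = x i := congrFun ha i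
      have h6 : ((a : ℂ).re : ℂ) = (a : ℂ) := Complex.conj_eq_iff_re.mp hareal
      show x i = ((a : ℂ).re : ℝ) • y i
      calc x i = (a : ℂ) * y i := h5.symm
        _ = ((a : ℂ).re : ℂ) * y i := by rw [h6]
        _ = ((a : ℂ).re : ℝ) • y i := Complex.real_smul.symm
    -- contradiction with linear independence
    set c : b := ⟨x, hx⟩ with hc
    have hnot := hbli.notMem_span_image (s := {i : b | i ≠ c}) (x := c) (by simp)
    apply hnot
    have hy' : y ∈ Subtype.val '' {i : b | i ≠ c} := by
      refine ⟨⟨y, hy⟩, ?_, rfl⟩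
      intro h
      exact hne ((congrArg Subtype.val h).symm)
    show (c : Fin (n+1) → ℂ) ∈ Submodule.span ℝ (Subtype.val '' {i : b | i ≠ c})
    have hcx : (c : Fin (n+1) → ℂ) = ((a : ℂ).re : ℝ) • y := hxay
    rw [hcx]
    exact Submodule.smul_mem _ _ (Submodule.subset_span hy')
  -- conclude
  have h1 : (F '' b).ncard = b.ncard := Set.ncard_image_of_injOn hinj
  have h2 : (F '' b).ncard ≤ (realProjSet n ∩ unitaryRealProjSet n g).ncard :=
    Set.ncard_le_ncard hsubset hfin
  omega
end

section
/- Let n ≥ 1. The set of elements g of the unitary group U(n+1) for which the intersection ℝPⁿ ∩ g·ℝPⁿ in ℂPⁿ is a finite set is an open subset of U(n+1). -/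
set_option linter.unusedSectionVars false
set_option maxHeartbeats 1000000


open Matrix Set


namespace URPF

variable {m : Type*} [Fintype m] [DecidableEq m]

/-- complexification of a real vector -/
def cv (v : m → ℝ) : m → ℂ := fun i => (v i : ℂ)

lemma star_cv (v : m → ℝ) : star (cv v) = cv v := by
  funext i
  simp [cv, Complex.conj_ofReal]

lemma exists_cv_of_star_fixed {x : m → ℂ} (hx : star x = x) : ∃ v : m → ℝ, cv v = x := by
  refine ⟨fun i => (x i).re, funext fun i => ?_⟩
  have h := congrFun hx i
  simpa [cv] using Complex.conj_eq_iff_re.mp h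

lemma star_mulVec' (A : Matrix m m ℂ) (x : m → ℂ) :
    star (A *ᵥ x) = (Aᴴ)ᵀ *ᵥ (star x) := by
  rw [Matrix.star_mulVec, Matrix.mulVec_transpose]

lemma mulVec_sub_smul_one (A : Matrix m m ℂ) (ν : ℂ) (x : m → ℂ) :
    (A - ν • 1) *ᵥ x = A *ᵥ x - ν • x := by
  rw [Matrix.sub_mulVec, Matrix.smul_mulVec, Matrix.one_mulVec]

/-- independence of a pair, concretely -/
def IndepPair (x y : m → ℂ) : Prop := ∀ c d : ℂ, c • x + d • y = 0 → c = 0 ∧ d = 0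

lemma IndepPair.ne_zero_left {x y : m → ℂ} (h : IndepPair x y) : x ≠ 0 := by
  intro hx
  exact one_ne_zero (h 1 0 (by simp [hx])).1

lemma IndepPair.ne_zero_right {x y : m → ℂ} (h : IndepPair x y) : y ≠ 0 := by
  intro hy
  exact one_ne_zero (h 0 1 (by simp [hy])).2

lemma exists_smul_of_not_indep {x y : m → ℂ} (hx : x ≠ 0) (hy : y ≠ 0)
    (h : ¬ IndepPair x y) : ∃ c : ℂ, c ≠ 0 ∧ y = c • x := by
  rw [IndepPair] at h
  push_neg at h
  obtain ⟨c, d, h0, hne⟩ := h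
  by_cases hd : d = 0
  · subst hd
    simp only [zero_smul, add_zero] at h0
    rcases smul_eq_zero.mp h0 with hc | hx'
    · exact absurd rfl (hne hc)
    · exact absurd hx' hx
  · have hyx : y = (-(d⁻¹ * c)) • x := by
      have h1 : d • y = -(c • x) := eq_neg_of_add_eq_zero_right h0
      calc y = d⁻¹ • (d • y) := by rw [smul_smul, inv_mul_cancel₀ hd, one_smul]
      _ = d⁻¹ • (-(c • x)) := by rw [h1]
      _ = (-(d⁻¹ * c)) • x := by rw [smul_neg, smul_smul, neg_smul]
    refine ⟨-(d⁻¹ * c), fun hc0 => hy ?_, hyx⟩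
    rw [hyx, hc0, zero_smul]

def KernelBig (A : Matrix m m ℂ) : Prop :=
  ∃ x y : m → ℂ, A *ᵥ x = 0 ∧ A *ᵥ y = 0 ∧ IndepPair x y

lemma updateColumn_mulVec (A : Matrix m m ℂ) (j : m) (z : m → ℂ) (k : m → ℂ) :
    (A.updateCol j z) *ᵥ k = A *ᵥ (Function.update k j 0) + k j • z := by
  funext i
  simp only [Matrix.mulVec, dotProduct, Matrix.updateCol_apply, Pi.add_apply,
    Pi.smul_apply, smul_eq_mul, Function.update_apply]
  rw [Finset.sum_congr rfl (fun l _ => show (if l = j then z i else A i l) * k l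
        = ((if l = j then 0 else A i l * k l) + (if l = j then z i * k l else 0)) by
      by_cases h : l = j <;> simp [h])]
  rw [Finset.sum_add_distrib, Finset.sum_ite_eq' Finset.univ j (fun l => z i * k l)]
  simp only [Finset.mem_univ, if_true]
  congr 1
  · exact Finset.sum_congr rfl (fun l _ => by by_cases h : l = j <;> simp [h])
  · ring

-- D1
lemma det_updateColumn_eq_zero_of_kernelBig {A : Matrix m m ℂ} (h : KernelBig A)
    (j : m) (z : m → ℂ) : (A.updateCol j z).det = 0 := by
  obtain ⟨x, y, hx, hy, hP⟩ := h
  have hx0 : x ≠ 0 := hP.ne_zero_left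
  obtain ⟨k, hk0, hkker, hkj⟩ : ∃ k : m → ℂ, k ≠ 0 ∧ A *ᵥ k = 0 ∧ k j = 0 := by
    by_cases hxj : x j = 0
    · exact ⟨x, hx0, hx, hxj⟩
    · refine ⟨(y j) • x - (x j) • y, ?_, ?_, ?_⟩
      · intro h0
        have : (y j) • x + (-(x j)) • y = 0 := by
          rw [neg_smul, ← sub_eq_add_neg]; exact h0
        exact hxj (neg_eq_zero.mp (hP _ _ this).2)
      · rw [Matrix.mulVec_sub, Matrix.mulVec_smul, Matrix.mulVec_smul, hx, hy]
        simp
      · simp [mul_comm]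
  rw [← Matrix.exists_mulVec_eq_zero_iff]
  refine ⟨k, hk0, ?_⟩
  rw [updateColumn_mulVec, hkj, zero_smul, add_zero, ← hkj, Function.update_eq_self]
  exact hkker

-- D2
lemma exists_det_updateColumn_ne_zero [Nonempty m] {A : Matrix m m ℂ}
    (h : ¬ KernelBig A) :
    ∃ (j : m) (z : m → ℂ), (A.updateCol j z).det ≠ 0 := by
  by_cases hdet : A.det = 0
  · obtain ⟨u, hu0, huk⟩ := (Matrix.exists_mulVec_eq_zero_iff).mpr hdet
    obtain ⟨j, huj⟩ : ∃ j, u j ≠ 0 := by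
      by_contra h'; push_neg at h'; exact hu0 (funext h')
    obtain ⟨z, hz⟩ : ∃ z : m → ℂ, ∀ w : m → ℂ, A *ᵥ w ≠ z := by
      by_contra hsurj; push_neg at hsurj
      have hsur : Function.Surjective (Matrix.mulVecLin A) := by
        intro z; obtain ⟨w, hw⟩ := hsurj z; exact ⟨w, by simpa [Matrix.mulVecLin_apply] using hw⟩
      have hinj : Function.Injective (Matrix.mulVecLin A) :=
        (LinearMap.injective_iff_surjective).mpr hsur
      apply hu0
      apply hinj
      simpa [Matrix.mulVecLin_apply] using huk
    refine ⟨j, z, ?_⟩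
    intro hdetB
    obtain ⟨k, hk0, hkB⟩ := (Matrix.exists_mulVec_eq_zero_iff).mpr hdetB
    rw [updateColumn_mulVec] at hkB
    by_cases hkj : k j = 0
    · rw [hkj, zero_smul, add_zero, ← hkj, Function.update_eq_self] at hkB
      have hni : ¬ IndepPair u k := fun hP => h ⟨u, k, huk, hkB, hP⟩
      obtain ⟨c, hc0, hck⟩ := exists_smul_of_not_indep hu0 hk0 hni
      have hkj' : k j = c * u j := by rw [hck]; simp
      rw [hkj] at hkj'
      exact huj ((mul_eq_zero.mp hkj'.symm).resolve_left hc0)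
    · apply hz ((-(k j)⁻¹) • Function.update k j 0)
      rw [Matrix.mulVec_smul]
      have hAz : A *ᵥ Function.update k j 0 = -(k j • z) := eq_neg_of_add_eq_zero_left hkB
      rw [hAz]
      simp [smul_smul, inv_mul_cancel₀ hkj]
  · exact ⟨Classical.arbitrary m, fun i => A i (Classical.arbitrary m),
      by rwa [Matrix.updateCol_eq_self]⟩

lemma star_dot_self_ne_zero {x : m → ℂ} (hx : x ≠ 0) : star x ⬝ᵥ x ≠ 0 := by
  have hre : star x ⬝ᵥ x = ((∑ i, Complex.normSq (x i) : ℝ) : ℂ) := by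
    simp only [dotProduct, Pi.star_apply, Complex.ofReal_sum]
    refine Finset.sum_congr rfl fun i _ => ?_
    rw [Complex.star_def, Complex.normSq_eq_conj_mul_self]
  rw [hre]
  intro h0
  have hsum : (∑ i, Complex.normSq (x i) : ℝ) = 0 := by exact_mod_cast h0
  apply hx
  funext i
  have := (Finset.sum_eq_zero_iff_of_nonneg
    (fun i _ => Complex.normSq_nonneg (x i))).mp hsum i (Finset.mem_univ i)
  exact Complex.normSq_eq_zero.mp this

-- L2 : eigenvalues of unitary matrices are unimodular
lemma star_eigen_unit {A : Matrix m m ℂ} (hA : Aᴴ * A = 1) {x : m → ℂ} {ν : ℂ}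
    (hx : A *ᵥ x = ν • x) (hx0 : x ≠ 0) : star ν * ν = 1 := by
  have key : star (A *ᵥ x) ⬝ᵥ (A *ᵥ x) = star x ⬝ᵥ x := by
    rw [Matrix.star_mulVec, Matrix.dotProduct_mulVec, Matrix.vecMul_vecMul, hA, Matrix.vecMul_one]
  rw [hx] at key
  have key2 : (star ν * ν) * (star x ⬝ᵥ x) = star x ⬝ᵥ x := by
    calc (star ν * ν) * (star x ⬝ᵥ x)
        = star (ν • x) ⬝ᵥ (ν • x) := by
          rw [star_smul, smul_dotProduct, dotProduct_smul,
            smul_eq_mul, smul_eq_mul]; ring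
    _ = star x ⬝ᵥ x := key
  exact mul_right_cancel₀ (star_dot_self_ne_zero hx0) (key2.trans (one_mul _).symm)


variable {m : Type*} [Fintype m] [DecidableEq m]

lemma ct_t (A : Matrix m m ℂ) : (Aᵀ)ᴴ = (Aᴴ)ᵀ := by
  ext i j
  simp [Matrix.conjTranspose_apply, Matrix.transpose_apply]

lemma MM_unit_left {G : Matrix m m ℂ} (h1 : Gᴴ * G = 1) (h2 : G * Gᴴ = 1) :
    (G * Gᵀ)ᴴ * (G * Gᵀ) = 1 := by
  rw [Matrix.conjTranspose_mul, ct_t, Matrix.mul_assoc, ← Matrix.mul_assoc Gᴴ G Gᵀ, h1,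
    Matrix.one_mul, ← Matrix.transpose_mul, h2, Matrix.transpose_one]

lemma MM_unit_right {G : Matrix m m ℂ} (h1 : Gᴴ * G = 1) (h2 : G * Gᴴ = 1) :
    (G * Gᵀ) * (G * Gᵀ)ᴴ = 1 := by
  rw [Matrix.conjTranspose_mul, ct_t, Matrix.mul_assoc, ← Matrix.mul_assoc Gᵀ (Gᴴ)ᵀ Gᴴ,
    ← Matrix.transpose_mul, h1, Matrix.transpose_one, Matrix.one_mul, h2]

lemma MM_symm (G : Matrix m m ℂ) : (G * Gᵀ)ᵀ = G * Gᵀ := by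
  rw [Matrix.transpose_mul, Matrix.transpose_transpose]

lemma cv_def (v : m → ℝ) : cv v = fun i => (v i : ℂ) := rfl

variable {n : ℕ}

lemma unitary_h1 (g : Matrix.unitaryGroup (Fin (n+1)) ℂ) :
    (g : Matrix (Fin (n+1)) (Fin (n+1)) ℂ)ᴴ * (g : Matrix (Fin (n+1)) (Fin (n+1)) ℂ) = 1 := by
  have h := g.2
  rw [Matrix.mem_unitaryGroup_iff'] at h
  rwa [Matrix.star_eq_conjTranspose] at h

lemma unitary_h2 (g : Matrix.unitaryGroup (Fin (n+1)) ℂ) :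
    (g : Matrix (Fin (n+1)) (Fin (n+1)) ℂ) * (g : Matrix (Fin (n+1)) (Fin (n+1)) ℂ)ᴴ = 1 := by
  have h := g.2
  rw [Matrix.mem_unitaryGroup_iff] at h
  rwa [Matrix.star_eq_conjTranspose] at h

lemma mem_inter_iff (n : ℕ) (g : Matrix.unitaryGroup (Fin (n+1)) ℂ)
    (p : Projectivization ℂ (Fin (n+1) → ℂ)) :
    p ∈ realProjSet n ∩ unitaryRealProjSet n g ↔
      ∃ (u : Fin (n+1) → ℝ) (hu : cv u ≠ 0), p = Projectivization.mk ℂ (cv u) hu ∧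
        ∃ ν : ℂ, ((g : Matrix (Fin (n+1)) (Fin (n+1)) ℂ)
          * (g : Matrix (Fin (n+1)) (Fin (n+1)) ℂ)ᵀ) *ᵥ (cv u) = ν • (cv u) := by
  set G : Matrix (Fin (n+1)) (Fin (n+1)) ℂ := (g : Matrix (Fin (n+1)) (Fin (n+1)) ℂ) with hG
  have h1 : Gᴴ * G = 1 := unitary_h1 g
  have h2 : G * Gᴴ = 1 := unitary_h2 g
  constructor
  · rintro ⟨⟨v, hv, rfl⟩, ⟨w, hw, hpw⟩⟩
    obtain ⟨a, ha⟩ := (Projectivization.mk_eq_mk_iff' ℂ (cv v) (G *ᵥ cv w) hv hw).mp hpw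
    have ha0 : a ≠ 0 := fun h => hv (show cv v = 0 by rw [← ha, h, zero_smul])
    have hstar : star a • ((Gᴴ)ᵀ *ᵥ cv w) = cv v := by
      have hs := congrArg star ha
      rwa [star_smul, star_mulVec', star_cv, star_cv] at hs
    have hGt : Gᵀ *ᵥ cv v = star a • cv w := by
      rw [← hstar, Matrix.mulVec_smul, Matrix.mulVec_mulVec, ← Matrix.transpose_mul, h1,
        Matrix.transpose_one, Matrix.one_mulVec]
    have hGwv : G *ᵥ cv w = a⁻¹ • cv v := by
      rw [← ha, smul_smul, inv_mul_cancel₀ ha0, one_smul]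
    refine ⟨v, hv, rfl, star a * a⁻¹, ?_⟩
    rw [← Matrix.mulVec_mulVec, hGt, Matrix.mulVec_smul, hGwv, smul_smul]
  · rintro ⟨u, hu, rfl, ν, heig⟩
    have hν : star ν * ν = 1 := star_eigen_unit (MM_unit_left h1 h2) heig hu
    set w₀ : (Fin (n+1)) → ℂ := Gᴴ *ᵥ cv u with hw₀
    have hGtu : Gᵀ *ᵥ cv u = ν • w₀ := by
      have happ := congrArg (fun x => Gᴴ *ᵥ x) heig
      simp only [Matrix.mulVec_mulVec, Matrix.mulVec_smul] at happ
      rw [← Matrix.mul_assoc, h1, Matrix.one_mul] at happ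
      exact happ
    have hsw₀ : star w₀ = ν • w₀ := by
      rw [hw₀, star_mulVec', Matrix.conjTranspose_conjTranspose, star_cv, hGtu]
    set c : ℂ := if ν = -1 then Complex.I else 1 + ν with hc
    have hc0 : c ≠ 0 := by
      by_cases hm : ν = -1
      · simp [hc, hm, Complex.I_ne_zero]
      · simp only [hc, hm, if_false]
        intro h0
        exact hm (by linear_combination h0)
    have hcν : star c * ν = c := by
      by_cases hm : ν = -1
      · simp [hc, hm, Complex.conj_I]
      · simp only [hc, hm, if_false]
        rw [star_add, star_one, add_mul, one_mul, hν]
        ring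
    set w : (Fin (n+1)) → ℂ := c • w₀ with hwdef
    have hws : star w = w := by
      rw [hwdef, star_smul, hsw₀, smul_smul, hcν]
    obtain ⟨wR, hwR⟩ := exists_cv_of_star_fixed hws
    have hGw : G *ᵥ w = c • cv u := by
      rw [hwdef, Matrix.mulVec_smul, hw₀, Matrix.mulVec_mulVec, h2, Matrix.one_mulVec]
    have hGwR : G *ᵥ cv wR ≠ 0 := by
      rw [hwR, hGw]
      exact smul_ne_zero hc0 hu
    refine ⟨⟨u, hu, rfl⟩, ⟨wR, hGwR, ?_⟩⟩
    apply (Projectivization.mk_eq_mk_iff' ℂ (cv u) (G *ᵥ cv wR) hu hGwR).mpr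
    exact ⟨c⁻¹, by rw [hwR, hGw, smul_smul, inv_mul_cancel₀ hc0, one_smul]⟩

lemma eig_star {M : Matrix m m ℂ} (hsym : Mᵀ = M) (h2 : M * Mᴴ = 1) {ν : ℂ}
    (hν : star ν * ν = 1) {x : m → ℂ} (hx : M *ᵥ x = ν • x) :
    M *ᵥ star x = ν • star x := by
  have hcs : (Mᴴ)ᵀ = Mᴴ := by rw [← ct_t, hsym]
  have hstar : Mᴴ *ᵥ star x = star ν • star x := by
    rw [← hcs, ← star_mulVec', hx, star_smul]
  have happ := congrArg (fun y => M *ᵥ y) hstar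
  simp only [Matrix.mulVec_mulVec, Matrix.mulVec_smul] at happ
  rw [h2, Matrix.one_mulVec] at happ
  -- happ : star x = star ν • (M *ᵥ star x)
  have := congrArg (fun y => ν • y) happ
  simp only [smul_smul] at this
  rw [mul_comm ν (star ν), hν, one_smul] at this
  exact this.symm

lemma line_of_dep {x a b : m → ℂ} {α β : ℂ} (hx : x = α • a + β • b)
    (hdep : ¬ IndepPair a b) (hx0 : x ≠ 0) :
    ∃ u, (u = a ∨ u = b) ∧ ∃ γ : ℂ, x = γ • u := by
  rw [IndepPair] at hdep; push_neg at hdep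
  obtain ⟨c, d, h0, hne⟩ := hdep
  by_cases hc : c = 0
  · have hd := hne hc
    rw [hc, zero_smul, zero_add] at h0
    have hb : b = 0 := (smul_eq_zero.mp h0).resolve_left hd
    exact ⟨a, Or.inl rfl, α, by rw [hx, hb, smul_zero, add_zero]⟩
  · have ha : a = (-(c⁻¹ * d)) • b := by
      have h1 : c • a = -(d • b) := eq_neg_of_add_eq_zero_left h0
      calc a = c⁻¹ • (c • a) := by rw [smul_smul, inv_mul_cancel₀ hc, one_smul]
      _ = (-(c⁻¹ * d)) • b := by rw [h1, smul_neg, smul_smul, neg_smul]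
    exact ⟨b, Or.inr rfl, α * (-(c⁻¹ * d)) + β, by rw [hx, ha, smul_smul, ← add_smul]⟩

lemma indep_of_lines {x y u v : m → ℂ} (hP : IndepPair x y) {γ δ : ℂ}
    (hxg : x = γ • u) (hyd : y = δ • v) : IndepPair u v := by
  have hγ : γ ≠ 0 := fun h => hP.ne_zero_left (by rw [hxg, h, zero_smul])
  have hδ : δ ≠ 0 := fun h => hP.ne_zero_right (by rw [hyd, h, zero_smul])
  intro c d h0
  have h1 : (c * γ⁻¹) • x + (d * δ⁻¹) • y = 0 := by
    rw [hxg, hyd, smul_smul, smul_smul, mul_assoc, inv_mul_cancel₀ hγ, mul_one,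
      mul_assoc, inv_mul_cancel₀ hδ, mul_one]
    exact h0
  have h2 := hP _ _ h1
  exact ⟨(mul_eq_zero.mp h2.1).resolve_right (inv_ne_zero hγ),
    (mul_eq_zero.mp h2.2).resolve_right (inv_ne_zero hδ)⟩

lemma star_fix_add (x : m → ℂ) : star (x + star x) = x + star x := by
  rw [star_add, star_star, add_comm]

lemma star_fix_smul_sub (x : m → ℂ) :
    star (Complex.I • (x - star x)) = Complex.I • (x - star x) := by
  rw [star_smul, star_sub, star_star, Complex.star_def, Complex.conj_I, neg_smul,
    ← smul_neg, neg_sub]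

lemma exists_real_indep_pair {x y : m → ℂ} (hP : IndepPair x y) :
    ∃ a b : m → ℂ,
      (a = x + star x ∨ a = Complex.I • (x - star x) ∨ a = y + star y
        ∨ a = Complex.I • (y - star y)) ∧
      (b = x + star x ∨ b = Complex.I • (x - star x) ∨ b = y + star y
        ∨ b = Complex.I • (y - star y)) ∧ IndepPair a b := by
  have hco : (-(2⁻¹:ℂ) * Complex.I) * Complex.I = 2⁻¹ := by
    rw [mul_assoc, Complex.I_mul_I]; ring
  have hspan : ∀ z : m → ℂ,
      z = (2⁻¹:ℂ) • (z + star z) + (-(2⁻¹:ℂ) * Complex.I) • (Complex.I • (z - star z)) := by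
    intro z
    rw [smul_smul, hco]
    module
  by_cases h12 : IndepPair (x + star x) (Complex.I • (x - star x))
  · exact ⟨_, _, Or.inl rfl, Or.inr (Or.inl rfl), h12⟩
  by_cases h34 : IndepPair (y + star y) (Complex.I • (y - star y))
  · exact ⟨_, _, Or.inr (Or.inr (Or.inl rfl)), Or.inr (Or.inr (Or.inr rfl)), h34⟩
  obtain ⟨u, hu, γ, hxu⟩ := line_of_dep (hspan x) h12 hP.ne_zero_left
  obtain ⟨v, hv, δ, hyv⟩ := line_of_dep (hspan y) h34 hP.ne_zero_right
  refine ⟨u, v, ?_, ?_, indep_of_lines hP hxu hyv⟩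
  · rcases hu with rfl | rfl
    · exact Or.inl rfl
    · exact Or.inr (Or.inl rfl)
  · rcases hv with rfl | rfl
    · exact Or.inr (Or.inr (Or.inl rfl))
    · exact Or.inr (Or.inr (Or.inr rfl))

lemma infinite_of_kernelBig (n : ℕ) (g : Matrix.unitaryGroup (Fin (n+1)) ℂ) {ν : ℂ}
    (hKB : KernelBig (((g : Matrix (Fin (n+1)) (Fin (n+1)) ℂ)
      * (g : Matrix (Fin (n+1)) (Fin (n+1)) ℂ)ᵀ) - ν • 1)) :
    ¬ (realProjSet n ∩ unitaryRealProjSet n g).Finite := by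
  intro hfin
  set G : Matrix (Fin (n+1)) (Fin (n+1)) ℂ := (g : Matrix (Fin (n+1)) (Fin (n+1)) ℂ) with hG
  have h1 : Gᴴ * G = 1 := unitary_h1 g
  have h2 : G * Gᴴ = 1 := unitary_h2 g
  obtain ⟨x, y, hx, hy, hP⟩ := hKB
  rw [mulVec_sub_smul_one, sub_eq_zero] at hx hy
  have hν : star ν * ν = 1 := star_eigen_unit (MM_unit_left h1 h2) hx hP.ne_zero_left
  have hsym : (G * Gᵀ)ᵀ = G * Gᵀ := MM_symm G
  have hMr : (G * Gᵀ) * (G * Gᵀ)ᴴ = 1 := MM_unit_right h1 h2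
  have hxs : (G * Gᵀ) *ᵥ star x = ν • star x := eig_star hsym hMr hν hx
  have hys : (G * Gᵀ) *ᵥ star y = ν • star y := eig_star hsym hMr hν hy
  obtain ⟨a, b, hamem, hbmem, hab⟩ := exists_real_indep_pair hP
  have heigaux : ∀ z : Fin (n+1) → ℂ, (G * Gᵀ) *ᵥ z = ν • z →
      ((G * Gᵀ) *ᵥ (z + star z) = ν • (z + star z)) ∧
      ((G * Gᵀ) *ᵥ (Complex.I • (z - star z)) = ν • (Complex.I • (z - star z))) := by
    intro z hz
    have hzs := eig_star hsym hMr hν hz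
    constructor
    · rw [Matrix.mulVec_add, hz, hzs, smul_add]
    · rw [Matrix.mulVec_smul, Matrix.mulVec_sub, hz, hzs, ← smul_sub, smul_comm]
  have haeig : (G * Gᵀ) *ᵥ a = ν • a := by
    rcases hamem with rfl | rfl | rfl | rfl
    · exact (heigaux x hx).1
    · exact (heigaux x hx).2
    · exact (heigaux y hy).1
    · exact (heigaux y hy).2
  have hbeig : (G * Gᵀ) *ᵥ b = ν • b := by
    rcases hbmem with rfl | rfl | rfl | rfl
    · exact (heigaux x hx).1
    · exact (heigaux x hx).2
    · exact (heigaux y hy).1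
    · exact (heigaux y hy).2
  have hastar : star a = a := by
    rcases hamem with rfl | rfl | rfl | rfl
    · exact star_fix_add x
    · exact star_fix_smul_sub x
    · exact star_fix_add y
    · exact star_fix_smul_sub y
  have hbstar : star b = b := by
    rcases hbmem with rfl | rfl | rfl | rfl
    · exact star_fix_add x
    · exact star_fix_smul_sub x
    · exact star_fix_add y
    · exact star_fix_smul_sub y
  have hne : ∀ t : ℝ, a + (t:ℂ) • b ≠ 0 := by
    intro t h0
    exact one_ne_zero (hab 1 (t:ℂ) (by rw [one_smul]; exact h0)).1
  have hmem : ∀ t : ℝ, Projectivization.mk ℂ (a + (t:ℂ) • b) (hne t)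
      ∈ realProjSet n ∩ unitaryRealProjSet n g := by
    intro t
    apply (mem_inter_iff n g _).mpr
    have hsfix : star (a + (t:ℂ) • b) = a + (t:ℂ) • b := by
      rw [star_add, star_smul, hastar, hbstar, Complex.star_def, Complex.conj_ofReal]
    obtain ⟨uR, huR⟩ := exists_cv_of_star_fixed hsfix
    have hcvne : cv uR ≠ 0 := by rw [huR]; exact hne t
    refine ⟨uR, hcvne, ?_, ν, ?_⟩
    · apply (Projectivization.mk_eq_mk_iff' ℂ _ _ (hne t) hcvne).mpr
      exact ⟨1, by rw [huR, one_smul]⟩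
    · rw [huR, Matrix.mulVec_add, Matrix.mulVec_smul, haeig, hbeig, smul_add, smul_comm]
  have hinj : Function.Injective
      (fun t : ℝ => Projectivization.mk ℂ (a + (t:ℂ) • b) (hne t)) := by
    intro t t' hmk
    simp only at hmk
    obtain ⟨α, hα⟩ := (Projectivization.mk_eq_mk_iff' ℂ _ _ (hne t) (hne t')).mp hmk
    have hz : (α - 1) • a + (α * (t':ℂ) - (t:ℂ)) • b
        = α • (a + (t':ℂ) • b) - (a + (t:ℂ) • b) := by module
    rw [hα, sub_self] at hz
    have h2' := hab _ _ hz
    have hα1 : α = 1 := by linear_combination h2'.1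
    have : (t':ℂ) = (t:ℂ) := by
      have := h2'.2
      rw [hα1, one_mul, sub_eq_zero] at this
      exact this
    exact_mod_cast this.symm
  exact (Set.infinite_of_injective_forall_mem hinj hmem) hfin

lemma finite_of_forall_not_kernelBig (n : ℕ) (g : Matrix.unitaryGroup (Fin (n+1)) ℂ)
    (h : ∀ ν : ℂ, ¬ KernelBig (((g : Matrix (Fin (n+1)) (Fin (n+1)) ℂ)
      * (g : Matrix (Fin (n+1)) (Fin (n+1)) ℂ)ᵀ) - ν • 1)) :
    (realProjSet n ∩ unitaryRealProjSet n g).Finite := by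
  set G : Matrix (Fin (n+1)) (Fin (n+1)) ℂ := (g : Matrix (Fin (n+1)) (Fin (n+1)) ℂ) with hG
  have hR : (setOf (Module.End.HasEigenvalue (Matrix.mulVecLin (G * Gᵀ)))).Finite :=
    Module.End.finite_hasEigenvalue _
  refine Set.Finite.subset (Set.Finite.biUnion hR
    (t := fun ν => {p : Projectivization ℂ (Fin (n+1) → ℂ) |
      ∃ (u : Fin (n+1) → ℝ) (hu : cv u ≠ 0), p = Projectivization.mk ℂ (cv u) hu ∧
        (G * Gᵀ) *ᵥ cv u = ν • cv u}) ?_) ?_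
  · intro ν _
    apply Set.Subsingleton.finite
    rintro p ⟨u, hu, rfl, heig⟩ q ⟨u', hu', rfl, heig'⟩
    have hni : ¬ IndepPair (cv u) (cv u') := by
      intro hip
      exact h ν ⟨cv u, cv u',
        by rw [mulVec_sub_smul_one, heig, sub_self],
        by rw [mulVec_sub_smul_one, heig', sub_self], hip⟩
    obtain ⟨c, hc0, hcu⟩ := exists_smul_of_not_indep hu hu' hni
    apply (Projectivization.mk_eq_mk_iff' ℂ _ _ hu hu').mpr
    exact ⟨c⁻¹, by rw [hcu, smul_smul, inv_mul_cancel₀ hc0, one_smul]⟩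
  · intro p hp
    obtain ⟨u, hu, rfl, ν, heig⟩ := (mem_inter_iff n g _).mp hp
    have hE : Module.End.HasEigenvalue (Matrix.mulVecLin (G * Gᵀ)) ν :=
      Module.End.hasEigenvalue_of_hasEigenvector
        ⟨Module.End.mem_eigenspace_iff.mpr (by rw [Matrix.mulVecLin_apply]; exact heig), hu⟩
    exact Set.mem_biUnion hE ⟨u, hu, rfl, heig⟩

lemma norm_one_of_star_mul (ν : ℂ) (hν : star ν * ν = 1) : ‖ν‖ = 1 := by
  have h1 : (Complex.normSq ν : ℂ) = 1 := by
    rw [Complex.normSq_eq_conj_mul_self]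
    exact hν
  have h2 : Complex.normSq ν = 1 := by exact_mod_cast h1
  have h3 : ‖ν‖ ^ 2 = 1 := by
    rw [← Complex.sq_norm] at h2
    simpa using h2
  nlinarith [norm_nonneg ν]

lemma star_mul_of_norm_one (ν : ℂ) (hν : ‖ν‖ = 1) : star ν * ν = 1 := by
  rw [Complex.star_def, ← Complex.normSq_eq_conj_mul_self]
  rw [← Complex.sq_norm, hν]
  norm_num

lemma finite_iff (n : ℕ) (g : Matrix.unitaryGroup (Fin (n+1)) ℂ) :
    (realProjSet n ∩ unitaryRealProjSet n g).Finite ↔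
      ∀ ν : ℂ, ‖ν‖ = 1 → ∃ (j : Fin (n+1)) (z : Fin (n+1) → ℂ),
        (((((g : Matrix (Fin (n+1)) (Fin (n+1)) ℂ)
          * (g : Matrix (Fin (n+1)) (Fin (n+1)) ℂ)ᵀ) - ν • 1).updateCol j z)).det ≠ 0 := by
  set G : Matrix (Fin (n+1)) (Fin (n+1)) ℂ := (g : Matrix (Fin (n+1)) (Fin (n+1)) ℂ) with hG
  have h1 : Gᴴ * G = 1 := unitary_h1 g
  have h2 : G * Gᴴ = 1 := unitary_h2 g
  constructor
  · intro hfin ν _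
    apply exists_det_updateColumn_ne_zero
    intro hKB
    exact infinite_of_kernelBig n g hKB hfin
  · intro h
    apply finite_of_forall_not_kernelBig
    intro ν hKB
    obtain ⟨x, y, hx, hy, hP⟩ := hKB
    have hx' : (G * Gᵀ) *ᵥ x = ν • x := by
      rw [mulVec_sub_smul_one, sub_eq_zero] at hx
      exact hx
    have hν : star ν * ν = 1 := star_eigen_unit (MM_unit_left h1 h2) hx' hP.ne_zero_left
    obtain ⟨j, z, hdet⟩ := h ν (norm_one_of_star_mul ν hν)
    exact hdet (det_updateColumn_eq_zero_of_kernelBig ⟨x, y, hx, hy, hP⟩ j z)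

end URPF

/-- The set of `g ∈ U(n+1)` for which the intersection `ℝPⁿ ∩ g·ℝPⁿ` is finite
is open in `U(n+1)`. -/
theorem isOpen_unitary_intersection_finite (n : ℕ) (hn : 1 ≤ n) :
    IsOpen {g : Matrix.unitaryGroup (Fin (n + 1)) ℂ |
      (realProjSet n ∩ unitaryRealProjSet n g).Finite} := by
  classical
  rw [isOpen_iff_forall_mem_open]
  intro g₀ hg₀
  set Gset : Set ((Matrix.unitaryGroup (Fin (n+1)) ℂ) × ℂ) :=
    ⋃ (j : Fin (n+1)), ⋃ (z : Fin (n+1) → ℂ),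
      {q : (Matrix.unitaryGroup (Fin (n+1)) ℂ) × ℂ |
        (((((q.1 : Matrix (Fin (n+1)) (Fin (n+1)) ℂ)
          * (q.1 : Matrix (Fin (n+1)) (Fin (n+1)) ℂ)ᵀ) - q.2 • 1).updateCol j z)).det ≠ 0}
    with hGset
  have hGopen : IsOpen Gset := by
    apply isOpen_iUnion
    intro j
    apply isOpen_iUnion
    intro z
    have hcoe : Continuous (fun q : (Matrix.unitaryGroup (Fin (n+1)) ℂ) × ℂ =>
        (q.1 : Matrix (Fin (n+1)) (Fin (n+1)) ℂ)) :=
      continuous_subtype_val.comp continuous_fst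
    have hM : Continuous (fun q : (Matrix.unitaryGroup (Fin (n+1)) ℂ) × ℂ =>
        (q.1 : Matrix (Fin (n+1)) (Fin (n+1)) ℂ)
          * (q.1 : Matrix (Fin (n+1)) (Fin (n+1)) ℂ)ᵀ) :=
      hcoe.matrix_mul hcoe.matrix_transpose
    have hsm : Continuous (fun q : (Matrix.unitaryGroup (Fin (n+1)) ℂ) × ℂ =>
        q.2 • (1 : Matrix (Fin (n+1)) (Fin (n+1)) ℂ)) :=
      continuous_snd.smul continuous_const
    have hdet : Continuous (fun q : (Matrix.unitaryGroup (Fin (n+1)) ℂ) × ℂ =>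
        (((((q.1 : Matrix (Fin (n+1)) (Fin (n+1)) ℂ)
          * (q.1 : Matrix (Fin (n+1)) (Fin (n+1)) ℂ)ᵀ) - q.2 • 1).updateCol j z)).det) :=
      ((hM.sub hsm).matrix_updateCol j continuous_const).matrix_det
    exact isOpen_compl_singleton.preimage hdet
  have hsub : ({g₀} : Set (Matrix.unitaryGroup (Fin (n+1)) ℂ)) ×ˢ Metric.sphere (0:ℂ) 1
      ⊆ Gset := by
    rintro ⟨g, ν⟩ ⟨hg1, hg2⟩
    have hgg : g = g₀ := hg1
    subst hgg
    obtain ⟨j, z, hdet⟩ := (URPF.finite_iff n g).mp hg₀ ν (mem_sphere_zero_iff_norm.mp hg2)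
    exact Set.mem_iUnion.mpr ⟨j, Set.mem_iUnion.mpr ⟨z, hdet⟩⟩
  obtain ⟨v, w, hv, hw, hgv, hKw, hvw⟩ :=
    generalized_tube_lemma isCompact_singleton (isCompact_sphere (0:ℂ) 1) hGopen hsub
  refine ⟨v, ?_, hv, hgv rfl⟩
  intro g hg
  apply (URPF.finite_iff n g).mpr
  intro ν hν
  have hmem : (g, ν) ∈ Gset := hvw ⟨hg, hKw (mem_sphere_zero_iff_norm.mpr hν)⟩
  obtain ⟨j, hj⟩ := Set.mem_iUnion.mp hmem
  obtain ⟨z, hz⟩ := Set.mem_iUnion.mp hj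
  exact ⟨j, z, hz⟩
end
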